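/- If all proxies' true positions lie strictly on the same side of the unweighted median med of the full population, then no proxy has a manipulation under the weighted median rule in the truthful state. -/
import Mathlib


/-- `x` is a median of the multiset `P`. -/
def IsMedian (P : Multiset ℝ) (x : ℝ) : Prop :=
  x ∈ P ∧ 2 * (P.filter (fun y => y < x)).card ≤ P.card ∧
    2 * (P.filter (fun y => x < y)).card ≤ P.card

/-- The combined multiset of positions of proxies and followers. -/
def combined {m n : ℕ} (s : Fin m → ℝ) (p : Fin n → ℝ) : Multiset ℝ :=
  Finset.univ.val.map s + Finset.univ.val.map p

/-- If all proxies' true positions lie strictly on the same side of (w.l.o.g.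
strictly below) the unweighted median of the full population, then no proxy has a
manipulation under the weighted median rule in the truthful state: no unilateral
deviation makes the outcome (the proxy position closest to the new unweighted
median) strictly closer to the deviator's peak than the truthful outcome. -/
theorem no_manipulation_same_side {m n : ℕ} (hodd : Odd (m + n))
    (pM : Fin m → ℝ) (pN : Fin n → ℝ) (med : ℝ)
    (hmed : IsMedian (combined pM pN) med)
    (hside : ∀ k, pM k < med)
    (j0 : Fin m) (hj0 : ∀ k ≠ j0, |pM j0 - med| < |pM k - med|)
    (j : Fin m) (x : ℝ) (hx : x ≠ pM j) (μ' : ℝ)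
    (hμ' : IsMedian (combined (Function.update pM j x) pN) μ')
    (j' : Fin m)
    (hj' : ∀ k ≠ j',
      |Function.update pM j x j' - μ'| < |Function.update pM j x k - μ'|) :
    ¬ |Function.update pM j x j' - pM j| < |pM j0 - pM j| := by
  intro hlt
  -- First: the new median cannot move below the old one.
  have hmu : med ≤ μ' := by
    by_contra hcon
    push_neg at hcon
    have hcardP : (combined pM pN).card = m + n := by simp [combined]
    have hcardP' : (combined (Function.update pM j x) pN).card = m + n := by
      simp [combined]
    have hMfilt : ((Finset.univ.val.map pM).filter (fun y => y < med))
        = Finset.univ.val.map pM := by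
      rw [Multiset.filter_eq_self]
      intro a ha
      obtain ⟨k, _, rfl⟩ := Multiset.mem_map.1 ha
      exact hside k
    have h1 : ((combined pM pN).filter (fun y => y < med)).card
        = m + ((Finset.univ.val.map pN).filter (fun y => y < med)).card := by
      rw [combined, Multiset.filter_add, Multiset.card_add, hMfilt]
      simp
    have h2 : ((Finset.univ.val.map pN).filter (fun y => y < med)).card
        + ((Finset.univ.val.map pN).filter (fun y => ¬ y < med)).card = n := by
      rw [← Multiset.card_add, Multiset.filter_add_not]
      simp
    have h3 : ((Finset.univ.val.map pN).filter (fun y => ¬ y < med)).card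
        ≤ ((combined (Function.update pM j x) pN).filter (fun y => μ' < y)).card := by
      rw [combined, Multiset.filter_add, Multiset.card_add]
      exact le_add_left (Multiset.card_le_card (Multiset.monotone_filter_right _
        (fun b hb => lt_of_lt_of_le hcon (not_lt.1 hb))))
    have h4 := hmed.2.1
    have h5 := hμ'.2.2
    rw [hcardP, h1] at h4
    rw [hcardP'] at h5
    obtain ⟨t, ht⟩ := hodd
    omega
  by_cases hjj0 : j = j0
  · subst hjj0
    rw [sub_self, abs_zero] at hlt
    exact absurd hlt (not_lt.2 (abs_nonneg _))
  · have hj0j : j0 ≠ j := fun h => hjj0 h.symm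
    have hA : |pM j0 - med| < |pM j - med| := hj0 j hjj0
    have hsj := hside j
    have hsj0 := hside j0
    have hjlt : pM j < pM j0 := by
      rw [abs_of_neg (by linarith), abs_of_neg (by linarith)] at hA
      linarith
    by_cases hj'j : j' = j
    · rw [hj'j] at hlt hj'
      have hk := hj' j0 hj0j
      rw [Function.update_self, Function.update_of_ne hj0j] at hk
      rw [Function.update_self] at hlt
      -- hk : |x - μ'| < |pM j0 - μ'|
      have hk' : |pM j0 - μ'| = μ' - pM j0 := by
        rw [abs_of_neg (by linarith)]; ring
      rw [hk'] at hk
      have hxge : pM j0 < x := by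
        have := neg_abs_le (x - μ')
        linarith
      rw [abs_of_pos (by linarith), abs_of_pos (by linarith)] at hlt
      linarith
    · rw [Function.update_of_ne hj'j] at hlt
      by_cases hj'0 : j' = j0
      · rw [hj'0] at hlt
        exact lt_irrefl _ hlt
      · have hk := hj' j0 (fun h => hj'0 h.symm)
        rw [Function.update_of_ne hj'j, Function.update_of_ne hj0j] at hk
        have hs' := hside j'
        rw [abs_of_neg (by linarith), abs_of_neg (by linarith)] at hk
        have hgt : pM j0 < pM j' := by linarith
        rw [abs_of_pos (by linarith), abs_of_pos (by linarith)] at hlt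
        linarith
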